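/- Let F be a field, c, d ∈ F, and let T : ℤ × ℤ → F be a function with all values nonzero, satisfying for all (m,n) ∈ ℤ² the bilinear lattice system: T_{m+1,n+2}T_{m,n-1} = d·T_{m+1,n+1}T_{m,n} + c·T_{m+1,n}T_{m,n+1}; T_{m,n+2}T_{m+1,n-1} = d·T_{m,n+1}T_{m+1,n} + T_{m+1,n+1}T_{m,n}; T_{m+2,n+1}T_{m,n} = c·T_{m+1,n+1}T_{m+1,n} + T_{m+1,n+2}T_{m+1,n-1}; T_{m+2,n}T_{m,n+1} = T_{m+1,n+1}T_{m+1,n} + T_{m+1,n+2}T_{m+1,n-1}. Define y_{m,n} = T_{m,n-1}T_{m,n+2}/(T_{m,n}T_{m,n+1}) and w_{m,n} = T_{m+1,n+1}T_{m,n}/(T_{m+1,n}T_{m,n+1}). Then for all (m,n), whenever the relevant denominators are nonzero, one has φ̂(y_{m,n}, w_{m,n}) = (y_{m,n+1}, w_{m,n+1}) and ψ̂(y_{m,n}, w_{m,n}) = (y_{m+1,n}, w_{m+1,n}), where φ̂(u₁,u₂) = ((c + d(u₁+1)u₂)/u₁, (c + d·u₂)/(u₁u₂)) and ψ̂(u₁,u₂)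 = (ū₁, (ū₁+c)/(u₂(ū₁+1))) with ū₁ = (d·u₂+c)(u₂+d)/(u₁u₂). -/

import Mathlib

/-- The deformed A₃ map `φ̂(u₁,u₂) = ((c + d(u₁+1)u₂)/u₁, (c + d·u₂)/(u₁u₂))`. -/
noncomputable def phiHat {F : Type*} [Field F] (c d : F) (u : F × F) : F × F :=
  ((c + d * (u.1 + 1) * u.2) / u.1, (c + d * u.2) / (u.1 * u.2))

/-- The QRT map `ψ̂(u₁,u₂) = (ū₁, ū₂)` with `ū₁ = (d·u₂+c)(u₂+d)/(u₁u₂)` and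
`ū₂ = (ū₁+c)/(u₂(ū₁+1))`. -/
noncomputable def psiHat {F : Type*} [Field F] (c d : F) (u : F × F) : F × F :=
  ((d * u.2 + c) * (u.2 + d) / (u.1 * u.2),
    ((d * u.2 + c) * (u.2 + d) / (u.1 * u.2) + c) /
      (u.2 * ((d * u.2 + c) * (u.2 + d) / (u.1 * u.2) + 1)))

/-- Core algebraic lemma: the four component identities for the tau-function
substitution, with `A,…,W` standing for the eleven lattice values of `T`
around the point `(m,n)`. -/
lemma tau_core {F : Type*} [Field F] (c d A B C D E P Q R S V W : F)
    (hA : A ≠ 0) (hB : B ≠ 0) (hC : C ≠ 0) (hD : D ≠ 0)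
    (hP : P ≠ 0) (hQ : Q ≠ 0) (hR : R ≠ 0) (hS : S ≠ 0) (hV : V ≠ 0)
    (r1 : S * A = d * (R * B) + c * (Q * C))
    (r2 : D * P = d * (C * Q) + R * B)
    (r2' : E * Q = d * (D * R) + S * C)
    (r3 : W * B = c * (R * Q) + S * P)
    (r4 : V * C = R * Q + S * P) :
    (c + d * (A * D / (B * C) + 1) * (R * B / (Q * C))) / (A * D / (B * C)) =
        B * E / (C * D) ∧
    (c + d * (R * B / (Q * C))) / (A * D / (B * C) * (R * B / (Q * C))) =
        S * C / (R * D) ∧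
    (d * (R * B / (Q * C)) + c) * (R * B / (Q * C) + d) /
        (A * D / (B * C) * (R * B / (Q * C))) = P * S / (Q * R) ∧
    ((d * (R * B / (Q * C)) + c) * (R * B / (Q * C) + d) /
          (A * D / (B * C) * (R * B / (Q * C))) + c) /
        (R * B / (Q * C) *
          ((d * (R * B / (Q * C)) + c) * (R * B / (Q * C) + d) /
            (A * D / (B * C) * (R * B / (Q * C))) + 1)) = W * Q / (V * R) := by
  have k1 : c + d * (R * B / (Q * C)) = S * A / (Q * C) := by
    field_simp
    linear_combination -r1
  have k2 : R * B / (Q * C) + d = D * P / (Q * C) := by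
    field_simp
    linear_combination -r2
  have k3 : A * D / (B * C) * (R * B / (Q * C)) = A * D * R / (C * (Q * C)) := by
    field_simp
  have k5 : S * A / (Q * C) + d * (A * D * R / (C * (Q * C))) = A * E / (C * C) := by
    field_simp
    linear_combination -r2'
  have g1 : (c + d * (A * D / (B * C) + 1) * (R * B / (Q * C))) / (A * D / (B * C)) =
      B * E / (C * D) := by
    have k4 : c + d * (A * D / (B * C) + 1) * (R * B / (Q * C)) =
        S * A / (Q * C) + d * (A * D * R / (C * (Q * C))) := by
      rw [← k1, ← k3]; ring
    rw [k4, k5]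
    field_simp
  have g2 : (c + d * (R * B / (Q * C))) / (A * D / (B * C) * (R * B / (Q * C))) =
      S * C / (R * D) := by
    rw [k1, k3]
    field_simp
  have g3 : (d * (R * B / (Q * C)) + c) * (R * B / (Q * C) + d) /
      (A * D / (B * C) * (R * B / (Q * C))) = P * S / (Q * R) := by
    rw [show d * (R * B / (Q * C)) + c = c + d * (R * B / (Q * C)) from by ring,
      k1, k2, k3]
    field_simp
  have g4 : ((d * (R * B / (Q * C)) + c) * (R * B / (Q * C) + d) /
        (A * D / (B * C) * (R * B / (Q * C))) + c) /
      (R * B / (Q * C) *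
        ((d * (R * B / (Q * C)) + c) * (R * B / (Q * C) + d) /
          (A * D / (B * C) * (R * B / (Q * C))) + 1)) = W * Q / (V * R) := by
    rw [g3]
    have k6 : P * S / (Q * R) + c = W * B / (Q * R) := by
      field_simp
      linear_combination -r3
    have k7 : P * S / (Q * R) + 1 = V * C / (Q * R) := by
      field_simp
      linear_combination -r4
    rw [k6, k7]
    field_simp
  exact ⟨g1, g2, g3, g4⟩

/-- tau functions on the ℤ² lattice satisfying the bilinear lattice
system give, via `y_{m,n} = T_{m,n-1}T_{m,n+2}/(T_{m,n}T_{m,n+1})` and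
`w_{m,n} = T_{m+1,n+1}T_{m,n}/(T_{m+1,n}T_{m,n+1})`, simultaneous orbits of the
deformed A₃ map `φ̂` (in the `n` direction) and the QRT map `ψ̂` (in the `m`
direction). -/
theorem lattice_tau_functions_give_commuting_orbits {F : Type*} [Field F]
    (c d : F) (T : ℤ → ℤ → F) (hT : ∀ m n, T m n ≠ 0)
    (e₁ : ∀ m n, T (m + 1) (n + 2) * T m (n - 1) =
      d * (T (m + 1) (n + 1) * T m n) + c * (T (m + 1) n * T m (n + 1)))
    (e₂ : ∀ m n, T m (n + 2) * T (m + 1) (n - 1) =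
      d * (T m (n + 1) * T (m + 1) n) + T (m + 1) (n + 1) * T m n)
    (e₃ : ∀ m n, T (m + 2) (n + 1) * T m n =
      c * (T (m + 1) (n + 1) * T (m + 1) n) + T (m + 1) (n + 2) * T (m + 1) (n - 1))
    (e₄ : ∀ m n, T (m + 2) n * T m (n + 1) =
      T (m + 1) (n + 1) * T (m + 1) n + T (m + 1) (n + 2) * T (m + 1) (n - 1))
    (y w : ℤ → ℤ → F)
    (hy : ∀ m n, y m n = T m (n - 1) * T m (n + 2) / (T m n * T m (n + 1)))
    (hw : ∀ m n, w m n = T (m + 1) (n + 1) * T m n / (T (m + 1) n * T m (n + 1))) :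
    ∀ m n : ℤ,
      phiHat c d (y m n, w m n) = (y m (n + 1), w m (n + 1)) ∧
      ((d * w m n + c) * (w m n + d) / (y m n * w m n) + 1 ≠ 0 →
        psiHat c d (y m n, w m n) = (y (m + 1) n, w (m + 1) n)) := by
  intro m n
  have n1 : n + 1 - 1 = n := by ring
  have n2 : n + 1 + 2 = n + 3 := by ring
  have n3 : n + 1 + 1 = n + 2 := by ring
  have m1 : m + 1 + 1 = m + 2 := by ring
  have r2' := e₂ m (n + 1)
  rw [n1, n2, n3] at r2'
  have hyn := hy m (n + 1)
  rw [n1, n2, n3] at hyn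
  have hwn := hw m (n + 1)
  rw [n3] at hwn
  have hym := hy (m + 1) n
  have hwm := hw (m + 1) n
  rw [m1] at hwm
  obtain ⟨g1, g2, g3, g4⟩ :=
    tau_core c d (T m (n - 1)) (T m n) (T m (n + 1)) (T m (n + 2)) (T m (n + 3))
      (T (m + 1) (n - 1)) (T (m + 1) n) (T (m + 1) (n + 1)) (T (m + 1) (n + 2))
      (T (m + 2) n) (T (m + 2) (n + 1))
      (hT _ _) (hT _ _) (hT _ _) (hT _ _) (hT _ _) (hT _ _) (hT _ _) (hT _ _) (hT _ _)
      (e₁ m n) (e₂ m n) r2' (e₃ m n) (e₄ m n)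
  refine ⟨?_, fun _ => ?_⟩
  · simp only [phiHat, Prod.mk.injEq]
    rw [hy m n, hw m n, hyn, hwn]
    exact ⟨g1, g2⟩
  · simp only [psiHat, Prod.mk.injEq]
    rw [hy m n, hw m n, hym, hwm]
    exact ⟨g3, g4⟩
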